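/- Let Σ be a finite nonempty alphabet, n a positive integer, and P ⊆ (Fin n → Σ) a property. Suppose there exists S ∈ P, and there exists U : Fin n → Σ and an integer k ≥ 1 with d(U,P) ≥ k/n. Then for every integer l with 1 ≤ l < k, every adaptive randomized q-query algorithm that is an (l/n)-test for P satisfies q ≥ k/(3l). -/

import Mathlib

open scoped Classical

/-- A deterministic adaptive `q`-query strategy over inputs `Fin n → Γ`. -/
structure Strategy (Γ : Type*) (n q : ℕ) where
  query : (i : Fin q) → (Fin i → Γ) → Fin n
  decide : (Fin q → Γ) → Bool

/-- The answers obtained by running a strategy on input `X`. -/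
noncomputable def Strategy.answers {Γ : Type*} {n q : ℕ}
    (S : Strategy Γ n q) (X : Fin n → Γ) (i : Fin q) : Γ :=
  X (S.query i (fun j => Strategy.answers S X ⟨j.val, j.isLt.trans i.isLt⟩))
termination_by i.val

/-- A strategy accepts `X` iff its decision on the answers is `true`. -/
def Strategy.accepts {Γ : Type*} {n q : ℕ} (S : Strategy Γ n q) (X : Fin n → Γ) : Prop :=
  S.decide (S.answers X) = true

/-- Acceptance probability of an adaptive randomized algorithm (a PMF over strategies). -/
noncomputable def acceptProb {Γ : Type*} {n q : ℕ}
    (μ : PMF (Strategy Γ n q)) (X : Fin n → Γ) : ℝ :=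
  (∑' S : Strategy Γ n q, if S.accepts X then μ S else 0).toReal

/-- Normalized Hamming distance. -/
noncomputable def hdist {Γ : Type*} {n : ℕ} (X Y : Fin n → Γ) : ℝ :=
  (Finset.univ.filter fun j => X j ≠ Y j).card / n

/-- Distance from an input to a property. -/
noncomputable def distSet {Γ : Type*} {n : ℕ} (X : Fin n → Γ) (P : Set (Fin n → Γ)) : ℝ :=
  sInf ((fun Y => hdist X Y) '' P)

/-- `μ` is an `ε`-test for `P`. -/
def IsTest {Γ : Type*} {n q : ℕ} (μ : PMF (Strategy Γ n q))
    (P : Set (Fin n → Γ)) (ε : ℝ) : Prop :=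
  (∀ X ∈ P, 2/3 ≤ acceptProb μ X) ∧
  (∀ X : Fin n → Γ, ε ≤ distSet X P → acceptProb μ X ≤ 1/3)

/-- The set of indices where `U` and `V` differ. -/
noncomputable def diffSet {Γ : Type*} {n : ℕ} (U V : Fin n → Γ) : Finset (Fin n) :=
  Finset.univ.filter fun j => U j ≠ V j

/-- `patch U V A` takes the values of `U` on `A` and of `V` elsewhere. -/
def patch {Γ : Type*} {n : ℕ} (U V : Fin n → Γ) (A : Finset (Fin n)) : Fin n → Γ :=
  fun j => if j ∈ A then U j else V j

/-- `μ` is a `(U,V,l)`-distinguisher. -/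
def IsDistinguisher {Γ : Type*} {n q : ℕ} (μ : PMF (Strategy Γ n q))
    (U V : Fin n → Γ) (l : ℕ) : Prop :=
  2/3 ≤ acceptProb μ V ∧
  ∀ A : Finset (Fin n), A ⊆ diffSet U V → A.card = l →
    acceptProb μ (patch U V A) ≤ 1/3

/-- A non-adaptive randomized `q`-query algorithm is a PMF over pairs
(query positions, decision function). -/
abbrev NAStrategy (Γ : Type*) (n q : ℕ) := (Fin q → Fin n) × ((Fin q → Γ) → Bool)

/-- Acceptance probability of a non-adaptive randomized algorithm. -/
noncomputable def naAcceptProb {Γ : Type*} {n q : ℕ}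
    (μ : PMF (NAStrategy Γ n q)) (X : Fin n → Γ) : ℝ :=
  (∑' p : NAStrategy Γ n q, if p.2 (fun i => X (p.1 i)) = true then μ p else 0).toReal

/-- `μ` (non-adaptive) is a `(U,V,l)`-distinguisher. -/
def NAIsDistinguisher {Γ : Type*} {n q : ℕ} (μ : PMF (NAStrategy Γ n q))
    (U V : Fin n → Γ) (l : ℕ) : Prop :=
  2/3 ≤ naAcceptProb μ V ∧
  ∀ A : Finset (Fin n), A ⊆ diffSet U V → A.card = l →
    naAcceptProb μ (patch U V A) ≤ 1/3

/-- Probability that index `j` appears among the query positions of a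
non-adaptive algorithm. -/
noncomputable def queryProb {Γ : Type*} {n q : ℕ}
    (μ : PMF (NAStrategy Γ n q)) (j : Fin n) : ℝ :=
  (∑' p : NAStrategy Γ n q, if ∃ i : Fin q, p.1 i = j then μ p else 0).toReal

open scoped ENNReal NNReal

section Aux

noncomputable def prevAnswers {Γ : Type*} {n q : ℕ} (s : Strategy Γ n q) (X : Fin n → Γ)
    (i : Fin q) : Fin i → Γ :=
  fun j => s.answers X ⟨j.val, j.isLt.trans i.isLt⟩

noncomputable def qpos {Γ : Type*} {n q : ℕ} (s : Strategy Γ n q) (X : Fin n → Γ)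
    (i : Fin q) : Fin n :=
  s.query i (prevAnswers s X i)

noncomputable def qset {Γ : Type*} {n q : ℕ} (s : Strategy Γ n q) (X : Fin n → Γ) :
    Finset (Fin n) :=
  Finset.image (qpos s X) Finset.univ

lemma answers_eq {Γ : Type*} {n q : ℕ} (s : Strategy Γ n q) (X : Fin n → Γ) (i : Fin q) :
    s.answers X i = X (qpos s X i) := by
  rw [Strategy.answers]; rfl

lemma answers_congr {Γ : Type*} {n q : ℕ} (s : Strategy Γ n q) (X Y : Fin n → Γ)
    (h : ∀ j ∈ qset s X, Y j = X j) : s.answers Y = s.answers X := by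
  have key : ∀ m : ℕ, ∀ i : Fin q, i.val < m → s.answers Y i = s.answers X i := by
    intro m
    induction m with
    | zero => intro i hi; omega
    | succ m IH =>
      intro i hi
      have hprev : prevAnswers s Y i = prevAnswers s X i := by
        funext j
        have hj2 : (j : ℕ) < m := by
          have h1 := j.isLt
          have h2 := i.isLt
          omega
        exact IH ⟨j.val, j.isLt.trans i.isLt⟩ hj2
      rw [answers_eq, answers_eq]
      have hq : qpos s Y i = qpos s X i := by
        unfold qpos; rw [hprev]
      rw [hq]
      exact h _ (Finset.mem_image_of_mem _ (Finset.mem_univ i))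
  funext i
  exact key q i i.isLt

lemma accepts_congr {Γ : Type*} {n q : ℕ} (s : Strategy Γ n q) {X Y : Fin n → Γ}
    {A : Finset (Fin n)} (hA : ∀ j ∉ A, X j = Y j) (hq : ∀ j ∈ A, j ∉ qset s X) :
    s.accepts Y ↔ s.accepts X := by
  unfold Strategy.accepts
  rw [answers_congr s X Y (fun j hj => (hA j (fun hjA => hq j hjA hj)).symm)]

noncomputable def accE {Γ : Type*} {n q : ℕ} (μ : PMF (Strategy Γ n q)) (X : Fin n → Γ) :
    ℝ≥0∞ :=
  ∑' s : Strategy Γ n q, if s.accepts X then μ s else 0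

noncomputable def memE {Γ : Type*} {n q : ℕ} (μ : PMF (Strategy Γ n q)) (X : Fin n → Γ)
    (j : Fin n) : ℝ≥0∞ :=
  ∑' s : Strategy Γ n q, if j ∈ qset s X then μ s else 0

lemma accE_le_one {Γ : Type*} {n q : ℕ} (μ : PMF (Strategy Γ n q)) (X : Fin n → Γ) :
    accE μ X ≤ 1 := by
  calc accE μ X ≤ ∑' s : Strategy Γ n q, μ s :=
        ENNReal.tsum_le_tsum (fun s => by split <;> simp)
    _ = 1 := μ.tsum_coe

lemma memE_le_one {Γ : Type*} {n q : ℕ} (μ : PMF (Strategy Γ n q)) (X : Fin n → Γ)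
    (j : Fin n) : memE μ X j ≤ 1 := by
  calc memE μ X j ≤ ∑' s : Strategy Γ n q, μ s :=
        ENNReal.tsum_le_tsum (fun s => by split <;> simp)
    _ = 1 := μ.tsum_coe

lemma acceptProb_eq {Γ : Type*} {n q : ℕ} (μ : PMF (Strategy Γ n q)) (X : Fin n → Γ) :
    acceptProb μ X = (accE μ X).toReal := rfl

lemma accept_compare {Γ : Type*} {n q : ℕ} (μ : PMF (Strategy Γ n q)) (X Y : Fin n → Γ)
    (A : Finset (Fin n)) (hXY : ∀ j ∉ A, X j = Y j) :
    acceptProb μ X ≤ acceptProb μ Y + ∑ j ∈ A, (memE μ X j).toReal := by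
  have hpt : ∀ s : Strategy Γ n q, (if s.accepts X then μ s else 0) ≤
      (if s.accepts Y then μ s else 0) + ∑ j ∈ A, (if j ∈ qset s X then μ s else 0) := by
    intro s
    by_cases hx : s.accepts X
    · rw [if_pos hx]
      by_cases hhit : ∃ j ∈ A, j ∈ qset s X
      · obtain ⟨j, hjA, hjq⟩ := hhit
        calc (μ s : ℝ≥0∞) = (if j ∈ qset s X then μ s else 0) := by rw [if_pos hjq]
          _ ≤ ∑ j ∈ A, (if j ∈ qset s X then μ s else 0) :=
              Finset.single_le_sum (f := fun j => if j ∈ qset s X then μ s else 0)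
                (fun _ _ => zero_le) hjA
          _ ≤ _ := le_add_self
      · push_neg at hhit
        have hacc : s.accepts Y := (accepts_congr s hXY hhit).mpr hx
        rw [if_pos hacc]
        exact le_self_add
    · rw [if_neg hx]; exact zero_le
  have hE : accE μ X ≤ accE μ Y + ∑ j ∈ A, memE μ X j := by
    calc accE μ X ≤ ∑' s : Strategy Γ n q,
          ((if s.accepts Y then μ s else 0) + ∑ j ∈ A, (if j ∈ qset s X then μ s else 0)) :=
          ENNReal.tsum_le_tsum hpt
      _ = accE μ Y + ∑' s : Strategy Γ n q, ∑ j ∈ A, (if j ∈ qset s X then μ s else 0) :=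
          ENNReal.tsum_add
      _ = accE μ Y + ∑ j ∈ A, memE μ X j := by
          rw [Summable.tsum_finsetSum (fun i _ => ENNReal.summable)]
          rfl
  have hfin : accE μ Y + ∑ j ∈ A, memE μ X j ≠ ⊤ := by
    apply ENNReal.add_ne_top.2
    constructor
    · exact ne_top_of_le_ne_top ENNReal.one_ne_top (accE_le_one μ Y)
    · exact (ENNReal.sum_lt_top.2 fun j _ =>
        lt_of_le_of_lt (memE_le_one μ X j) ENNReal.one_lt_top).ne
  calc acceptProb μ X = (accE μ X).toReal := rfl
    _ ≤ (accE μ Y + ∑ j ∈ A, memE μ X j).toReal := ENNReal.toReal_mono hfin hE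
    _ = acceptProb μ Y + ∑ j ∈ A, (memE μ X j).toReal := by
        rw [ENNReal.toReal_add (ne_top_of_le_ne_top ENNReal.one_ne_top (accE_le_one μ Y))
          ((ENNReal.sum_lt_top.2 fun j _ =>
            lt_of_le_of_lt (memE_le_one μ X j) ENNReal.one_lt_top).ne),
          ENNReal.toReal_sum (fun j _ =>
            ne_top_of_le_ne_top ENNReal.one_ne_top (memE_le_one μ X j)),
          acceptProb_eq]

lemma sum_memE_le {Γ : Type*} {n q : ℕ} (μ : PMF (Strategy Γ n q)) (X : Fin n → Γ)
    (D : Finset (Fin n)) : ∑ j ∈ D, (memE μ X j).toReal ≤ (q : ℝ) := by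
  have hE : ∑ j ∈ D, memE μ X j ≤ (q : ℝ≥0∞) := by
    have hswap : ∑ j ∈ D, memE μ X j
        = ∑' s : Strategy Γ n q, ∑ j ∈ D, if j ∈ qset s X then μ s else 0 := by
      unfold memE
      exact (Summable.tsum_finsetSum (fun i _ => ENNReal.summable)).symm
    rw [hswap]
    have hpt : ∀ s : Strategy Γ n q,
        (∑ j ∈ D, if j ∈ qset s X then μ s else 0) ≤ (q : ℝ≥0∞) * μ s := by
      intro s
      have h1 : (∑ j ∈ D, if j ∈ qset s X then μ s else 0)
          = ∑ j ∈ D.filter (fun j => j ∈ qset s X), (μ s : ℝ≥0∞) :=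
        (Finset.sum_filter _ _).symm
      rw [h1, Finset.sum_const, nsmul_eq_mul]
      apply mul_le_mul_left
      have hcard : (D.filter (fun j => j ∈ qset s X)).card ≤ q := by
        calc (D.filter (fun j => j ∈ qset s X)).card ≤ (qset s X).card :=
            Finset.card_le_card (fun j hj => (Finset.mem_filter.1 hj).2)
          _ ≤ (Finset.univ : Finset (Fin q)).card := Finset.card_image_le
          _ = q := by simp
      exact_mod_cast Nat.cast_le.2 hcard
    calc (∑' s : Strategy Γ n q, ∑ j ∈ D, if j ∈ qset s X then μ s else 0)
        ≤ ∑' s : Strategy Γ n q, (q : ℝ≥0∞) * μ s := ENNReal.tsum_le_tsum hpt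
      _ = (q : ℝ≥0∞) * ∑' s : Strategy Γ n q, μ s := ENNReal.tsum_mul_left
      _ = (q : ℝ≥0∞) := by rw [μ.tsum_coe, mul_one]
  calc ∑ j ∈ D, (memE μ X j).toReal = (∑ j ∈ D, memE μ X j).toReal :=
      (ENNReal.toReal_sum (fun j _ =>
        ne_top_of_le_ne_top ENNReal.one_ne_top (memE_le_one μ X j))).symm
    _ ≤ ((q : ℝ≥0∞)).toReal := ENNReal.toReal_mono (ENNReal.natCast_ne_top q) hE
    _ = (q : ℝ) := by simp

lemma exists_small_subset {ι : Type*} (p : ι → ℝ) (hp : ∀ j, 0 ≤ p j) :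
    ∀ (l : ℕ) (D : Finset ι), l ≤ D.card →
      ∃ A : Finset ι, A ⊆ D ∧ A.card = l ∧
        (∑ j ∈ A, p j) * D.card ≤ l * ∑ j ∈ D, p j := by
  intro l
  induction l with
  | zero =>
    intro D _
    exact ⟨∅, Finset.empty_subset _, rfl, by simp⟩
  | succ l IH =>
    intro D hD
    have hne : D.Nonempty := Finset.card_pos.1 (by omega)
    obtain ⟨j0, hj0D, hj0min⟩ := D.exists_min_image p hne
    have hcarde : (D.erase j0).card = D.card - 1 := Finset.card_erase_of_mem hj0D
    obtain ⟨A', hA'sub, hA'card, hA'⟩ := IH (D.erase j0) (by omega)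
    have hj0A' : j0 ∉ A' := fun h => (Finset.mem_erase.1 (hA'sub h)).1 rfl
    refine ⟨insert j0 A', ?_, ?_, ?_⟩
    · intro x hx
      rcases Finset.mem_insert.1 hx with h | h
      · exact h ▸ hj0D
      · exact Finset.mem_of_mem_erase (hA'sub h)
    · rw [Finset.card_insert_of_notMem hj0A', hA'card]
    · set d : ℝ := (D.card : ℝ) with hd
      set T : ℝ := ∑ j ∈ D, p j with hT
      set m : ℝ := p j0 with hm
      set Sp : ℝ := ∑ j ∈ A', p j with hSp
      have hsumi : ∑ j ∈ insert j0 A', p j = m + Sp := Finset.sum_insert hj0A'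
      have hsume : ∑ j ∈ D.erase j0, p j = T - m := by
        rw [hT, hm, ← Finset.add_sum_erase D p hj0D]; ring
      have hdl : ((l : ℝ) + 1) ≤ d := by
        rw [hd]; exact_mod_cast hD
      have hmd : m * d ≤ T := by
        have := Finset.card_nsmul_le_sum D p m (fun x hx => hj0min x hx)
        rw [nsmul_eq_mul] at this
        rw [hd, hT, hm]; linarith [this]
      have hcaste : ((D.erase j0).card : ℝ) = d - 1 := by
        rw [hcarde, hd]
        have : 1 ≤ D.card := by omega
        push_cast [Nat.cast_sub this]
        ring
      rw [hcaste, hsume] at hA'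
      have hm0 : 0 ≤ m := hp j0
      have hSp0 : 0 ≤ Sp := Finset.sum_nonneg (fun j _ => hp j)
      have hd1 : (0:ℝ) ≤ d - 1 := by linarith
      rw [hsumi]
      have key : 0 ≤ (d - 1) * ((((l:ℝ)+1) * T) - (m + Sp) * d) := by
        nlinarith [mul_le_mul_of_nonneg_left hA' (by linarith : (0:ℝ) ≤ d),
          mul_nonneg (by linarith : (0:ℝ) ≤ d - (l+1)) (by linarith : (0:ℝ) ≤ T - m * d)]
      rcases eq_or_lt_of_le hd1 with h | h
      · -- d = 1, so l = 0, A' = ∅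
        have hd1' : d = 1 := by linarith
        have hl0 : l = 0 := by
          have h9 : (l:ℝ) + 1 ≤ 1 := le_of_le_of_eq hdl hd1'
          have h10 : (l:ℝ) ≤ 0 := by linarith
          exact_mod_cast le_antisymm (by exact_mod_cast h10) (Nat.zero_le l)
        have : A' = ∅ := Finset.card_eq_zero.1 (by rw [hA'card, hl0])
        rw [this] at hSp
        simp only [Finset.sum_empty] at hSp
        rw [hd1', hl0]
        push_cast
        nlinarith [hmd, hd1']
      · have := (mul_nonneg_iff_of_pos_left h).1 key
        push_cast
        linarith

lemma hdist_nonneg {Γ : Type*} {n : ℕ} (X Y : Fin n → Γ) : 0 ≤ hdist X Y :=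
  div_nonneg (Nat.cast_nonneg _) (Nat.cast_nonneg _)

lemma hdist_triangle {Γ : Type*} {n : ℕ} (hn : 0 < n) (X Y Z : Fin n → Γ) :
    hdist X Z ≤ hdist X Y + hdist Y Z := by
  have hn' : (0:ℝ) < n := by exact_mod_cast hn
  have hcard : (Finset.univ.filter fun j => X j ≠ Z j).card ≤
      (Finset.univ.filter fun j => X j ≠ Y j).card +
      (Finset.univ.filter fun j => Y j ≠ Z j).card := by
    calc (Finset.univ.filter fun j => X j ≠ Z j).card
        ≤ ((Finset.univ.filter fun j => X j ≠ Y j) ∪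
           (Finset.univ.filter fun j => Y j ≠ Z j)).card := by
          apply Finset.card_le_card
          intro j hj
          simp only [Finset.mem_filter, Finset.mem_union, Finset.mem_univ, true_and] at *
          by_contra hc
          push_neg at hc
          exact hj (hc.1.trans hc.2)
      _ ≤ _ := Finset.card_union_le _ _
  unfold hdist
  rw [← add_div]
  have hc : ((Finset.univ.filter fun j => X j ≠ Z j).card : ℝ) ≤
      ((Finset.univ.filter fun j => X j ≠ Y j).card : ℝ) +
      ((Finset.univ.filter fun j => Y j ≠ Z j).card : ℝ) := by exact_mod_cast hcard
  gcongr

end Aux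

/-- **Theorem 1 (meticulous statement).** If a property `P ⊆ Γ^n` admits a satisfying
input `S` and an input `U` with `d(U,P) ≥ k/n` (`k ≥ 1`), then for every `1 ≤ l < k`,
any adaptive randomized `q`-query `(l/n)`-test for `P` satisfies `q ≥ k/(3l)`. -/
theorem test_lower_bound {Γ : Type*} [Fintype Γ] [Nonempty Γ] {n : ℕ} (hn : 0 < n)
    (P : Set (Fin n → Γ)) (S : Fin n → Γ) (hS : S ∈ P)
    (U : Fin n → Γ) (k : ℕ) (hk : 1 ≤ k) (hU : (k : ℝ) / n ≤ distSet U P)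
    (l : ℕ) (hl : 1 ≤ l) (hlk : l < k)
    (q : ℕ) (μ : PMF (Strategy Γ n q)) (hμ : IsTest μ P ((l : ℝ) / n)) :
    (k : ℝ) / (3 * l) ≤ q := by
  classical
  have hn' : (0:ℝ) < n := by exact_mod_cast hn
  -- choose a closest element W of P to U
  obtain ⟨W, hWP, hWmin⟩ := Set.exists_min_image P (fun Z => hdist U Z) (Set.toFinite P) ⟨S, hS⟩
  set D : Finset (Fin n) := diffSet U W with hDdef
  have hdUW : hdist U W = (D.card : ℝ) / n := rfl
  -- every element of P is at distance at least k/n from U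
  have hUZ : ∀ Z ∈ P, (k:ℝ)/n ≤ hdist U Z := by
    intro Z hZ
    refine hU.trans (csInf_le ⟨0, ?_⟩ ⟨Z, hZ, rfl⟩)
    rintro r ⟨Z', _, rfl⟩
    exact hdist_nonneg U Z'
  have hkd : (k:ℝ) ≤ (D.card : ℝ) := by
    have h1 := hUZ W hWP
    rw [hdUW] at h1
    have := (div_le_div_iff_of_pos_right hn').1 h1
    exact this
  have hkdN : k ≤ D.card := by exact_mod_cast hkd
  have hld : l ≤ D.card := le_of_lt (lt_of_lt_of_le hlk hkdN)
  -- query probabilities on W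
  set p : Fin n → ℝ := fun j => (memE μ W j).toReal with hp
  have hp0 : ∀ j, 0 ≤ p j := fun j => ENNReal.toReal_nonneg
  obtain ⟨A, hAD, hAcard, hAsum⟩ := exists_small_subset p hp0 l D hld
  set Y : Fin n → Γ := patch U W A with hY
  -- `Y` agrees with `W` off `A`
  have hWY : ∀ j ∉ A, W j = Y j := by
    intro j hj
    simp [hY, patch, hj]
  -- distance computation: diffSet U Y = D \ A
  have hdiffUY : diffSet U Y = D \ A := by
    ext j
    by_cases hjA : j ∈ A
    · simp [diffSet, hY, patch, hjA]
    · simp [diffSet, hY, patch, hjA, hDdef]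
  have hdUY : hdist U Y = ((D.card : ℝ) - l) / n := by
    have h1 : hdist U Y = ((diffSet U Y).card : ℝ) / n := rfl
    rw [h1, hdiffUY, Finset.card_sdiff_of_subset hAD, hAcard, Nat.cast_sub hld]
  -- Y is far from P
  have hYfar : (l:ℝ)/n ≤ distSet Y P := by
    refine le_csInf ⟨hdist Y W, ⟨W, hWP, rfl⟩⟩ ?_
    rintro r ⟨Z, hZ, rfl⟩
    have htri := hdist_triangle hn U Y Z
    have hmin : (D.card : ℝ)/n ≤ hdist U Z := by
      have := hWmin Z hZ
      rw [hdUW] at this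
      exact this
    have hid : ((D.card:ℝ))/n - ((D.card:ℝ) - l)/n = (l:ℝ)/n := by ring
    rw [hdUY] at htri
    linarith
  have hYrej : acceptProb μ Y ≤ 1/3 := hμ.2 Y hYfar
  have hWacc : 2/3 ≤ acceptProb μ W := hμ.1 W hWP
  have hmain := accept_compare μ W Y A hWY
  have hsumD : ∑ j ∈ D, p j ≤ (q : ℝ) := sum_memE_le μ W D
  have h13 : (1:ℝ)/3 ≤ ∑ j ∈ A, p j := by linarith
  have hA0 : (0:ℝ) ≤ ∑ j ∈ A, p j := Finset.sum_nonneg (fun j _ => hp0 j)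
  have hl0 : (0:ℝ) ≤ l := Nat.cast_nonneg l
  have hk3 : (k:ℝ) ≤ 3 * l * q := by
    nlinarith [mul_le_mul_of_nonneg_right hkd hA0]
  rw [div_le_iff₀ (by positivity : (0:ℝ) < 3 * l)]
  linarith
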